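/- Let α₁ ≠ α₂ ∈ ℂ, κ₁, κ₂ ∈ ℂ∖{0}, and let L ⊆ (ℂ∖{0})² be the image of the map z ↦ (κ₁(z−α₁), κ₂(z−α₂)) defined on ℂ∖{α₁,α₂}. Then there exist v ∈ ℝ² and a map φ : L → Γ_v such that ‖Log(q) − φ(q)‖_∞ ≤ 2 log 2 for every q ∈ L, and in addition Γ_v ∖ U_{2 log 2}({v}) ⊆ φ(L). -/

import Mathlib

/-- Coordinate-wise logarithm of moduli, `Log(z)_i = log |z_i|`. -/
noncomputable def LogMap {n : ℕ} (z : Fin n → ℂ) : Fin n → ℝ :=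
  fun i => Real.log ‖z i‖

/-- Open ε-neighbourhood of a set with respect to the sup norm on `Fin n → ℝ`. -/
def nbhd {n : ℕ} (ε : ℝ) (X : Set (Fin n → ℝ)) : Set (Fin n → ℝ) :=
  {y | ∃ x ∈ X, ‖y - x‖ < ε}

/-- Ray emanating from `v` in direction `d`. -/
def ray {n : ℕ} (v d : Fin n → ℝ) : Set (Fin n → ℝ) :=
  {x | ∃ t : ℝ, 0 ≤ t ∧ x = v + t • d}

/-- Standard tropical line in `ℝ²` with vertex `v`: three rays in directions
`(-1,0)`, `(0,-1)` and `(1,1)`. -/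
noncomputable def stdTropLine (v : Fin 2 → ℝ) : Set (Fin 2 → ℝ) :=
  ray v ![-1, 0] ∪ ray v ![0, -1] ∪ ray v ![1, 1]

/-- Auxiliary: the spine map on the parameter domain. -/
noncomputable def spineF (κ₁ κ₂ α₁ α₂ : ℂ) (z : ℂ) : Fin 2 → ℝ :=
  let c := ‖α₁ - α₂‖
  let v : Fin 2 → ℝ :=
    ![Real.log (‖κ₁‖) + Real.log c, Real.log (‖κ₂‖) + Real.log c]
  if ‖z - α₁‖ ≤ c / 2 then
    v + (Real.log c - Real.log (‖z - α₁‖)) • ![-1, 0]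
  else if ‖z - α₂‖ ≤ c / 2 then
    v + (Real.log c - Real.log (‖z - α₂‖)) • ![0, -1]
  else
    v + (max 0 (Real.log (‖z - α₁‖) - Real.log c)) • ![1, 1]

lemma loghelp2 {x y : ℝ} (hx : 0 < x) (h : x ≤ 2 * y) :
    Real.log x ≤ Real.log 2 + Real.log y := by
  have hy : 0 < y := by linarith
  calc Real.log x ≤ Real.log (2 * y) := Real.log_le_log hx h
    _ = Real.log 2 + Real.log y := Real.log_mul two_ne_zero hy.ne'

lemma loghelp3 {x y : ℝ} (hx : 0 < x) (h : x ≤ 3 * y) :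
    Real.log x ≤ Real.log 2 + Real.log 2 + Real.log y := by
  have hy : 0 < y := by linarith
  have h4 : x ≤ 2 * (2 * y) := by linarith
  calc Real.log x ≤ Real.log 2 + Real.log (2 * y) := loghelp2 hx h4
    _ = Real.log 2 + (Real.log 2 + Real.log y) := by
        rw [Real.log_mul two_ne_zero hy.ne']
    _ = _ := by ring

/-- The main per-point spec of the spine map. -/
lemma spineF_spec (α₁ α₂ : ℂ) (hα : α₁ ≠ α₂) (κ₁ κ₂ : ℂ) (hκ₁ : κ₁ ≠ 0) (hκ₂ : κ₂ ≠ 0)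
    (z : ℂ) (hz1 : z ≠ α₁) (hz2 : z ≠ α₂) :
    spineF κ₁ κ₂ α₁ α₂ z ∈ stdTropLine
      ![Real.log (‖κ₁‖) + Real.log (‖α₁ - α₂‖),
        Real.log (‖κ₂‖) + Real.log (‖α₁ - α₂‖)] ∧
    ‖LogMap ![κ₁ * (z - α₁), κ₂ * (z - α₂)] - spineF κ₁ κ₂ α₁ α₂ z‖ ≤ 2 * Real.log 2 := by
  set c := ‖α₁ - α₂‖ with hcdef
  set a := ‖z - α₁‖ with hadef
  set b := ‖z - α₂‖ with hbdef
  have hc : 0 < c := by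
    simpa [hcdef] using (norm_pos_iff.mpr (sub_ne_zero.mpr hα))
  have ha : 0 < a := by
    simpa [hadef] using (norm_pos_iff.mpr (sub_ne_zero.mpr hz1))
  have hb : 0 < b := by
    simpa [hbdef] using (norm_pos_iff.mpr (sub_ne_zero.mpr hz2))
  -- triangle inequalities
  have tri1 : c ≤ a + b := by
    have : α₁ - α₂ = (z - α₂) - (z - α₁) := by ring
    calc c = ‖((z - α₂) - (z - α₁))‖ := by rw [hcdef, this]
      _ ≤ b + a := norm_sub_le _ _
      _ = a + b := by ring
  have tri2 : a ≤ b + c := by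
    have h' : z - α₁ = (z - α₂) + (α₂ - α₁) := by ring
    calc a = ‖((z - α₂) + (α₂ - α₁))‖ := by rw [hadef, h']
      _ ≤ b + ‖α₂ - α₁‖ := norm_add_le _ _
      _ = b + c := by rw [norm_sub_rev]
  have tri3 : b ≤ a + c := by
    have h' : z - α₂ = (z - α₁) + (α₁ - α₂) := by ring
    calc b = ‖((z - α₁) + (α₁ - α₂))‖ := by rw [hbdef, h']
      _ ≤ a + c := norm_add_le _ _
  set L2 := Real.log 2 with hL2
  have hL2pos : 0 < L2 := Real.log_pos one_lt_two
  set la := Real.log a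
  set lb := Real.log b
  set lc := Real.log c
  set v : Fin 2 → ℝ :=
    ![Real.log (‖κ₁‖) + lc, Real.log (‖κ₂‖) + lc] with hv
  -- LogMap coordinates
  have hLog0 : LogMap ![κ₁ * (z - α₁), κ₂ * (z - α₂)] 0
      = Real.log (‖κ₁‖) + la := by
    simp only [LogMap, Matrix.cons_val_zero, norm_mul]
    rw [Real.log_mul ((norm_pos_iff.mpr hκ₁).ne') ha.ne']
  have hLog1 : LogMap ![κ₁ * (z - α₁), κ₂ * (z - α₂)] 1
      = Real.log (‖κ₂‖) + lb := by
    simp only [LogMap, Matrix.cons_val_one, Matrix.head_cons, Matrix.cons_val_zero, norm_mul]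
    rw [Real.log_mul ((norm_pos_iff.mpr hκ₂).ne') hb.ne']
  -- normalize goal
  have normle : ∀ w : Fin 2 → ℝ,
      (∀ i, |LogMap ![κ₁ * (z - α₁), κ₂ * (z - α₂)] i - w i| ≤ 2 * L2) →
      ‖LogMap ![κ₁ * (z - α₁), κ₂ * (z - α₂)] - w‖ ≤ 2 * L2 := by
    intro w hw
    rw [pi_norm_le_iff_of_nonneg (by positivity)]
    intro i
    simpa [Real.norm_eq_abs, Pi.sub_apply] using hw i
  by_cases h1 : a ≤ c / 2
  · -- branch 1
    have hF : spineF κ₁ κ₂ α₁ α₂ z = v + (lc - la) • ![-1, 0] := by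
      simp only [spineF]
      rw [if_pos (by exact h1)]
    have hla_le : la ≤ lc - L2 := by
      have := loghelp2 ha (by linarith : a ≤ 2 * (c/2))
      have h2 : Real.log (c/2) = lc - L2 := by
        rw [Real.log_div hc.ne' two_ne_zero]
      have := Real.log_le_log ha h1
      rw [h2] at this
      exact this
    have hb_lb : lc - L2 ≤ lb := by
      have h2b : c ≤ 2 * b := by linarith
      have := loghelp2 hc h2b
      linarith
    have hb_ub : lb ≤ lc + L2 := by
      have h2b : b ≤ 2 * c := by linarith
      have := loghelp2 hb h2b
      linarith
    constructor
    · rw [hF]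
      exact Or.inl (Or.inl ⟨lc - la, by linarith, rfl⟩)
    · apply normle
      rw [Fin.forall_fin_two]
      constructor
      · rw [hLog0, hF]
        simp only [Pi.add_apply, Pi.smul_apply, hv, Matrix.cons_val_zero, smul_eq_mul]
        rw [abs_le]; constructor <;> [nlinarith; nlinarith]
      · rw [hLog1, hF]
        simp only [Pi.add_apply, Pi.smul_apply, hv, Matrix.cons_val_one, Matrix.head_cons, Matrix.cons_val_zero,
          smul_eq_mul]
        rw [abs_le]; constructor <;> [nlinarith; nlinarith]
  · by_cases h2 : b ≤ c / 2
    · -- branch 2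
      have hF : spineF κ₁ κ₂ α₁ α₂ z = v + (lc - lb) • ![0, -1] := by
        simp only [spineF]
        rw [if_neg (by exact h1), if_pos (by exact h2)]
      have hlb_le : lb ≤ lc - L2 := by
        have h2' : Real.log (c/2) = lc - L2 := by
          rw [Real.log_div hc.ne' two_ne_zero]
        have := Real.log_le_log hb h2
        rw [h2'] at this
        exact this
      have ha_lb : lc - L2 ≤ la := by
        have h2a : c ≤ 2 * a := by linarith
        have := loghelp2 hc h2a
        linarith
      have ha_ub : la ≤ lc + L2 := by
        have h2a : a ≤ 2 * c := by linarith
        have := loghelp2 ha h2a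
        linarith
      constructor
      · rw [hF]
        exact Or.inl (Or.inr ⟨lc - lb, by linarith, rfl⟩)
      · apply normle
        rw [Fin.forall_fin_two]
        constructor
        · rw [hLog0, hF]
          simp only [Pi.add_apply, Pi.smul_apply, hv, Matrix.cons_val_zero, smul_eq_mul]
          rw [abs_le]; constructor <;> [nlinarith; nlinarith]
        · rw [hLog1, hF]
          simp only [Pi.add_apply, Pi.smul_apply, hv, Matrix.cons_val_one, Matrix.head_cons, Matrix.cons_val_zero,
            smul_eq_mul]
          rw [abs_le]; constructor <;> [nlinarith; nlinarith]
    · -- branch 3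
      push_neg at h1 h2
      have hF : spineF κ₁ κ₂ α₁ α₂ z = v + (max 0 (la - lc)) • ![1, 1] := by
        simp only [spineF]
        rw [if_neg (by exact not_le.mpr h1), if_neg (by exact not_le.mpr h2)]
      have ha_lb : lc - L2 ≤ la := by
        have h2a : c ≤ 2 * a := by linarith
        have := loghelp2 hc h2a
        linarith
      have hb_lb : lc - L2 ≤ lb := by
        have h2b : c ≤ 2 * b := by linarith
        have := loghelp2 hc h2b
        linarith
      constructor
      · rw [hF]
        exact Or.inr ⟨max 0 (la - lc), le_max_left _ _, rfl⟩
      · apply normle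
        have key : |la - lc - max 0 (la - lc)| ≤ 2 * L2 ∧
            |lb - lc - max 0 (la - lc)| ≤ 2 * L2 := by
          rcases le_total la lc with hcase | hcase
          · rw [max_eq_left (by linarith)]
            have hac : a ≤ c := by
              by_contra hcon
              push_neg at hcon
              have hgl : lc < la := Real.log_lt_log hc hcon
              linarith
            have hb_ub : lb ≤ lc + L2 := by
              have : b ≤ 2 * c := by linarith
              have := loghelp2 hb this
              linarith
            constructor <;> (rw [abs_le]; constructor <;> linarith)
          · rw [max_eq_right (by linarith)]
            have hca : c ≤ a := by
              by_contra hcon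
              push_neg at hcon
              have hgl : la < lc := Real.log_lt_log ha hcon
              linarith
            have hb_ub : lb ≤ L2 + la := by
              have : b ≤ 2 * a := by linarith
              exact loghelp2 hb this
            have ha_ub : la ≤ L2 + L2 + lb := by
              have : a ≤ 3 * b := by linarith
              exact loghelp3 ha this
            constructor <;> (rw [abs_le]; constructor <;> linarith)
        rw [Fin.forall_fin_two]
        constructor
        · rw [hLog0, hF]
          simp only [Pi.add_apply, Pi.smul_apply, hv, Matrix.cons_val_zero, smul_eq_mul]
          have := key.1
          calc |Real.log (‖κ₁‖) + la -
              (Real.log (‖κ₁‖) + lc + max 0 (la - lc) * 1)|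
              = |la - lc - max 0 (la - lc)| := by ring_nf
            _ ≤ 2 * L2 := this
        · rw [hLog1, hF]
          simp only [Pi.add_apply, Pi.smul_apply, hv, Matrix.cons_val_one, Matrix.head_cons, Matrix.cons_val_zero,
            smul_eq_mul]
          have := key.2
          calc |Real.log (‖κ₂‖) + lb -
              (Real.log (‖κ₂‖) + lc + max 0 (la - lc) * 1)|
              = |lb - lc - max 0 (la - lc)| := by ring_nf
            _ ≤ 2 * L2 := this

lemma norm_ray_le (v d : Fin 2 → ℝ) (t : ℝ) (ht : 0 ≤ t) (hd : ∀ i, |d i| ≤ 1) :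
    ‖v + t • d - v‖ ≤ t := by
  rw [pi_norm_le_iff_of_nonneg ht]
  intro i
  simp only [Pi.sub_apply, Pi.add_apply, Pi.smul_apply, smul_eq_mul, Real.norm_eq_abs]
  rw [show v i + t * d i - v i = t * d i from by ring, abs_mul, abs_of_nonneg ht]
  nlinarith [hd i, abs_nonneg (d i)]

theorem stmt_4 (α₁ α₂ : ℂ) (hα : α₁ ≠ α₂) (κ₁ κ₂ : ℂ) (hκ₁ : κ₁ ≠ 0) (hκ₂ : κ₂ ≠ 0) :
    ∃ (v : Fin 2 → ℝ) (φ : (Fin 2 → ℂ) → (Fin 2 → ℝ)),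
      (∀ q ∈ (fun z : ℂ => ![κ₁ * (z - α₁), κ₂ * (z - α₂)]) ''
          {z : ℂ | z ≠ α₁ ∧ z ≠ α₂},
        φ q ∈ stdTropLine v ∧ ‖LogMap q - φ q‖ ≤ 2 * Real.log 2) ∧
      stdTropLine v \ nbhd (2 * Real.log 2) {v}
        ⊆ φ '' ((fun z : ℂ => ![κ₁ * (z - α₁), κ₂ * (z - α₂)]) ''
            {z : ℂ | z ≠ α₁ ∧ z ≠ α₂}) := by
  classical
  set c := ‖α₁ - α₂‖ with hcdef
  have hc : 0 < c := norm_pos_iff.mpr (sub_ne_zero.mpr hα)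
  set v : Fin 2 → ℝ :=
    ![Real.log (‖κ₁‖) + Real.log c, Real.log (‖κ₂‖) + Real.log c] with hv
  refine ⟨v, fun q => spineF κ₁ κ₂ α₁ α₂ (q 0 / κ₁ + α₁), ?_, ?_⟩
  · rintro q ⟨z, ⟨hz1, hz2⟩, rfl⟩
    have harg : κ₁ * (z - α₁) / κ₁ + α₁ = z := by rw [mul_div_cancel_left₀ _ hκ₁]; ring
    simp only [Matrix.cons_val_zero]
    rw [harg]
    exact spineF_spec α₁ α₂ hα κ₁ κ₂ hκ₁ hκ₂ z hz1 hz2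
  · -- surjectivity
    rintro x ⟨hmem, hnot⟩
    set L2 := Real.log 2 with hL2
    have hL2pos : 0 < L2 := Real.log_pos one_lt_two
    -- helper to construct witnesses
    have hval : ∀ z : ℂ, z ≠ α₁ → z ≠ α₂ →
        spineF κ₁ κ₂ α₁ α₂ z = x →
        x ∈ (fun q => spineF κ₁ κ₂ α₁ α₂ (q 0 / κ₁ + α₁)) ''
          ((fun z : ℂ => ![κ₁ * (z - α₁), κ₂ * (z - α₂)]) '' {z : ℂ | z ≠ α₁ ∧ z ≠ α₂}) := by
      intro z hz1 hz2 hφ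
      refine ⟨![κ₁ * (z - α₁), κ₂ * (z - α₂)], ⟨z, ⟨hz1, hz2⟩, rfl⟩, ?_⟩
      have harg : κ₁ * (z - α₁) / κ₁ + α₁ = z := by rw [mul_div_cancel_left₀ _ hκ₁]; ring
      simp only [Matrix.cons_val_zero]
      rw [harg, hφ]
    -- from hnot : t ≥ 2 L2 where x = v + t • d
    have hdist : 2 * L2 ≤ ‖x - v‖ := by
      by_contra hcon
      push_neg at hcon
      exact hnot ⟨v, rfl, hcon⟩
    rcases hmem with (⟨t, ht, rfl⟩ | ⟨t, ht, rfl⟩) | ⟨t, ht, rfl⟩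
    · -- direction (-1, 0)
      have hxt : ‖v + t • (![-1, 0] : Fin 2 → ℝ) - v‖ ≤ t := by
        apply norm_ray_le _ _ _ ht
        intro i
        fin_cases i <;> norm_num
      have htge : 2 * L2 ≤ t := le_trans hdist hxt
      set z : ℂ := α₁ + (Real.exp (-t) : ℝ) * (α₂ - α₁) with hz
      have hexp : (0:ℝ) < Real.exp (-t) := Real.exp_pos _
      have hza : z - α₁ = (Real.exp (-t) : ℝ) * (α₂ - α₁) := by rw [hz]; ring
      have ha_eq : ‖z - α₁‖ = Real.exp (-t) * c := by
        rw [hza, norm_mul, Complex.norm_real, Real.norm_eq_abs, abs_of_pos hexp, hcdef,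
          norm_sub_rev]
      have hexp_le : Real.exp (-t) ≤ 1 / 4 := by
        have h1 : -t ≤ Real.log (1/4) := by
          rw [Real.log_div one_ne_zero (by norm_num : (4:ℝ) ≠ 0), Real.log_one,
            show (4:ℝ) = 2 * 2 by norm_num, Real.log_mul two_ne_zero two_ne_zero]
          linarith
        calc Real.exp (-t) ≤ Real.exp (Real.log (1/4)) := Real.exp_le_exp.mpr h1
          _ = 1 / 4 := Real.exp_log (by norm_num)
      have hz1 : z ≠ α₁ := by
        rw [hz]
        intro h
        have : ((Real.exp (-t) : ℝ) : ℂ) * (α₂ - α₁) = 0 := by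
          have := sub_eq_zero.mpr h.symm
          linear_combination -this
        rcases mul_eq_zero.mp this with h' | h'
        · exact hexp.ne' (by exact_mod_cast h')
        · exact hα (sub_eq_zero.mp h').symm
      have hz2 : z ≠ α₂ := by
        rw [hz]
        intro h
        have heq : ((Real.exp (-t) : ℝ) : ℂ) * (α₂ - α₁) = α₂ - α₁ := by
          linear_combination h
        have : (((Real.exp (-t) : ℝ) : ℂ) - 1) * (α₂ - α₁) = 0 := by
          linear_combination heq
        rcases mul_eq_zero.mp this with h' | h'
        · have : ((Real.exp (-t) : ℝ) : ℂ) = 1 := by linear_combination h'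
          have : Real.exp (-t) = 1 := by exact_mod_cast this
          linarith
        · exact hα (sub_eq_zero.mp h').symm
      apply hval z hz1 hz2
      have hcond : ‖z - α₁‖ ≤ c / 2 := by
        rw [ha_eq]
        calc Real.exp (-t) * c ≤ (1/2) * c := by nlinarith
          _ = c / 2 := by ring
      have hlog : Real.log c - Real.log (‖z - α₁‖) = t := by
        rw [ha_eq, Real.log_mul (Real.exp_ne_zero _) hc.ne', Real.log_exp]
        ring
      simp only [spineF]
      rw [if_pos hcond, hlog]
    · -- direction (0, -1)
      have hxt : ‖v + t • (![0, -1] : Fin 2 → ℝ) - v‖ ≤ t := by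
        apply norm_ray_le _ _ _ ht
        intro i
        fin_cases i <;> norm_num
      have htge : 2 * L2 ≤ t := le_trans hdist hxt
      set z : ℂ := α₂ + (Real.exp (-t) : ℝ) * (α₁ - α₂) with hz
      have hexp : (0:ℝ) < Real.exp (-t) := Real.exp_pos _
      have hzb : z - α₂ = (Real.exp (-t) : ℝ) * (α₁ - α₂) := by rw [hz]; ring
      have hb_eq : ‖z - α₂‖ = Real.exp (-t) * c := by
        rw [hzb, norm_mul, Complex.norm_real, Real.norm_eq_abs, abs_of_pos hexp, hcdef]
      have hexp_le : Real.exp (-t) ≤ 1 / 4 := by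
        have h1 : -t ≤ Real.log (1/4) := by
          rw [Real.log_div one_ne_zero (by norm_num : (4:ℝ) ≠ 0), Real.log_one,
            show (4:ℝ) = 2 * 2 by norm_num, Real.log_mul two_ne_zero two_ne_zero]
          linarith
        calc Real.exp (-t) ≤ Real.exp (Real.log (1/4)) := Real.exp_le_exp.mpr h1
          _ = 1 / 4 := Real.exp_log (by norm_num)
      have hz2 : z ≠ α₂ := by
        rw [hz]
        intro h
        have : ((Real.exp (-t) : ℝ) : ℂ) * (α₁ - α₂) = 0 := by
          have := sub_eq_zero.mpr h.symm
          linear_combination -this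
        rcases mul_eq_zero.mp this with h' | h'
        · exact hexp.ne' (by exact_mod_cast h')
        · exact hα (sub_eq_zero.mp h')
      have hz1 : z ≠ α₁ := by
        rw [hz]
        intro h
        have heq : (((Real.exp (-t) : ℝ) : ℂ) - 1) * (α₁ - α₂) = 0 := by
          linear_combination h
        rcases mul_eq_zero.mp heq with h' | h'
        · have : ((Real.exp (-t) : ℝ) : ℂ) = 1 := by linear_combination h'
          have : Real.exp (-t) = 1 := by exact_mod_cast this
          linarith
        · exact hα (sub_eq_zero.mp h')
      apply hval z hz1 hz2
      -- a = |z - α₁| = (1 - e^{-t}) c > c/2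
      have hza1 : z - α₁ = (1 - ((Real.exp (-t) : ℝ) : ℂ)) * (α₂ - α₁) := by
        rw [hz]; ring
      have ha_eq : ‖z - α₁‖ = (1 - Real.exp (-t)) * c := by
        rw [hza1, norm_mul]
        congr 1
        · rw [show (1 - ((Real.exp (-t) : ℝ) : ℂ)) = (((1 - Real.exp (-t) : ℝ)) : ℂ) by
            push_cast; ring]
          rw [Complex.norm_real, Real.norm_eq_abs, abs_of_pos (by linarith)]
        · rw [hcdef, norm_sub_rev]
      have hcond1 : ¬ ‖z - α₁‖ ≤ c / 2 := by
        rw [ha_eq]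
        push_neg
        nlinarith
      have hcond2 : ‖z - α₂‖ ≤ c / 2 := by
        rw [hb_eq]
        nlinarith
      have hlog : Real.log c - Real.log (‖z - α₂‖) = t := by
        rw [hb_eq, Real.log_mul (Real.exp_ne_zero _) hc.ne', Real.log_exp]
        ring
      simp only [spineF]
      rw [if_neg hcond1, if_pos hcond2, hlog]
    · -- direction (1, 1)
      have hxt : ‖v + t • (![1, 1] : Fin 2 → ℝ) - v‖ ≤ t := by
        apply norm_ray_le _ _ _ ht
        intro i
        fin_cases i <;> norm_num
      have htge : 2 * L2 ≤ t := le_trans hdist hxt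
      have hexp4 : (4:ℝ) ≤ Real.exp t := by
        have h4 : Real.log 4 ≤ t := by
          have : Real.log 4 = 2 * L2 := by
            rw [show (4:ℝ) = 2 * 2 by norm_num, Real.log_mul two_ne_zero two_ne_zero]
            ring
          linarith
        calc (4:ℝ) = Real.exp (Real.log 4) := (Real.exp_log (by norm_num)).symm
          _ ≤ Real.exp t := Real.exp_le_exp.mpr h4
      set z : ℂ := α₁ + (Real.exp t : ℝ) * (α₂ - α₁) with hz
      have hexp : (0:ℝ) < Real.exp t := Real.exp_pos _
      have hza : z - α₁ = (Real.exp t : ℝ) * (α₂ - α₁) := by rw [hz]; ring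
      have ha_eq : ‖z - α₁‖ = Real.exp t * c := by
        rw [hza, norm_mul, Complex.norm_real, Real.norm_eq_abs, abs_of_pos hexp, hcdef,
          norm_sub_rev]
      have hzb : z - α₂ = (((Real.exp t : ℝ) : ℂ) - 1) * (α₂ - α₁) := by
        rw [hz]; ring
      have hb_eq : ‖z - α₂‖ = (Real.exp t - 1) * c := by
        rw [hzb, norm_mul]
        congr 1
        · rw [show ((((Real.exp t : ℝ)) : ℂ) - 1) = (((Real.exp t - 1 : ℝ)) : ℂ) by
            push_cast; ring]
          rw [Complex.norm_real, Real.norm_eq_abs, abs_of_pos (by linarith)]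
        · rw [hcdef, norm_sub_rev]
      have hz1 : z ≠ α₁ := by
        intro h
        have : ‖z - α₁‖ = 0 := by rw [h, sub_self, norm_zero]
        rw [ha_eq] at this
        nlinarith
      have hz2 : z ≠ α₂ := by
        intro h
        have : ‖z - α₂‖ = 0 := by rw [h, sub_self, norm_zero]
        rw [hb_eq] at this
        nlinarith
      apply hval z hz1 hz2
      have hcond1 : ¬ ‖z - α₁‖ ≤ c / 2 := by
        rw [ha_eq]; push_neg; nlinarith
      have hcond2 : ¬ ‖z - α₂‖ ≤ c / 2 := by
        rw [hb_eq]; push_neg; nlinarith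
      have hlog : max 0 (Real.log (‖z - α₁‖) - Real.log c) = t := by
        rw [ha_eq, Real.log_mul (Real.exp_ne_zero _) hc.ne', Real.log_exp]
        rw [max_eq_right (by linarith)]
        ring
      simp only [spineF]
      rw [if_neg hcond1, if_neg hcond2, hlog]
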